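/- arXiv:2106.09829 — 2 statements merged into one kernel-verified Lean document; each statement's English description precedes it below -/
import Mathlib

section
/- Let P_n denote the path graph on n vertices and C_n the cycle graph on n vertices. Then (i) for all n ≥ 2, the differential of the subdivision graph of the path satisfies ∂(S(P_n)) = ⌊(2n−1)/3⌋, and (ii) for all n ≥ 3, the differential of the subdivision graph of the cycle satisfies ∂(S(C_n)) = ⌊2n/3⌋. -/
/-- The subdivision graph `S(G)`: vertices are `V(G) ⊕ E(G)`, with `v ∈ V(G)` adjacent to
`e ∈ E(G)` iff `v` is an endpoint of `e`. -/
def subdivision {V : Type*} (G : SimpleGraph V) : SimpleGraph (V ⊕ G.edgeSet) where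
  Adj a b :=
    match a, b with
    | Sum.inl v, Sum.inr e => v ∈ (e : Sym2 V)
    | Sum.inr e, Sum.inl v => v ∈ (e : Sym2 V)
    | _, _ => False
  symm := ⟨by rintro (v | e) (w | f) h <;> simp_all⟩
  loopless := ⟨by rintro (v | e) h <;> simp_all⟩


/-- `B(D)`: the set of vertices outside `D` that have a neighbour in `D`. -/
def extBoundary {W : Type*} (H : SimpleGraph W) (D : Set W) : Set W :=
  {v | v ∉ D ∧ ∃ u ∈ D, H.Adj u v}

/-- The differential of a set of vertices: `∂(D) = |B(D)| - |D|`. -/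
noncomputable def setDifferential {W : Type*} (H : SimpleGraph W) (D : Set W) : ℤ :=
  ((extBoundary H D).ncard : ℤ) - (D.ncard : ℤ)

/-- The differential of a graph: `∂(H) = max {∂(D) : D ⊆ V(H)}`. -/
noncomputable def graphDifferential {W : Type*} (H : SimpleGraph W) : ℤ :=
  sSup {x : ℤ | ∃ D : Set W, x = setDifferential H D}


section Iso

variable {V W : Type*} {G : SimpleGraph V} {H : SimpleGraph W}

lemma extBoundary_image (e : G ≃g H) (D : Set V) :
    extBoundary H ((e : V → W) '' D) = (e : V → W) '' extBoundary G D := by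
  ext w
  obtain ⟨v, rfl⟩ := e.surjective w
  simp only [extBoundary, Set.mem_setOf_eq, e.injective.mem_set_image]
  constructor
  · rintro ⟨hv, u, hu, hadj⟩
    obtain ⟨u', hu', rfl⟩ := hu
    exact ⟨hv, u', hu', e.map_adj_iff.mp hadj⟩
  · rintro ⟨hv, u, hu, hadj⟩
    exact ⟨hv, e u, Set.mem_image_of_mem _ hu, e.map_adj_iff.mpr hadj⟩

lemma setDifferential_image (e : G ≃g H) (D : Set V) :
    setDifferential H ((e : V → W) '' D) = setDifferential G D := by
  unfold setDifferential
  rw [extBoundary_image e D, Set.ncard_image_of_injective _ e.injective,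
    Set.ncard_image_of_injective _ e.injective]

lemma graphDifferential_congr (e : G ≃g H) :
    graphDifferential G = graphDifferential H := by
  unfold graphDifferential
  congr 1
  ext x
  simp only [Set.mem_setOf_eq]
  constructor
  · rintro ⟨D, rfl⟩
    exact ⟨(e : V → W) '' D, (setDifferential_image e D).symm⟩
  · rintro ⟨D, rfl⟩
    refine ⟨(e.symm : W → V) '' D, ?_⟩
    rw [← setDifferential_image e ((e.symm : W → V) '' D), Set.image_image]
    congr 1
    simp

end Iso

/-- Main combinatorial lemma: a graph on `Fin m` with max degree ≤ 2 containing the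
consecutive path has differential `⌊m/3⌋`. -/
lemma graphDifferential_eq_of (m : ℕ) (H : SimpleGraph (Fin m)) [DecidableRel H.Adj]
    (hdeg : ∀ v, H.degree v ≤ 2)
    (hadj : ∀ i : ℕ, (h : i + 1 < m) → H.Adj ⟨i, Nat.lt_of_succ_lt h⟩ ⟨i + 1, h⟩) :
    graphDifferential H = ((m / 3 : ℕ) : ℤ) := by
  classical
  have ub : ∀ D : Set (Fin m), setDifferential H D ≤ ((m / 3 : ℕ) : ℤ) := by
    intro D
    have hDfin : D.Finite := Set.toFinite _
    have hBfin : (extBoundary H D).Finite := Set.toFinite _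
    have hcard : (extBoundary H D).ncard ≤ 2 * D.ncard := by
      rw [Set.ncard_eq_toFinset_card _ hBfin, Set.ncard_eq_toFinset_card _ hDfin]
      have hsub : hBfin.toFinset ⊆ hDfin.toFinset.biUnion (fun u => H.neighborFinset u) := by
        intro v hv
        rw [Set.Finite.mem_toFinset] at hv
        obtain ⟨-, u, hu, hadj'⟩ := hv
        rw [Finset.mem_biUnion]
        exact ⟨u, (Set.Finite.mem_toFinset _).mpr hu, (H.mem_neighborFinset u v).mpr hadj'⟩
      calc hBfin.toFinset.card ≤ _ := Finset.card_le_card hsub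
        _ ≤ ∑ u ∈ hDfin.toFinset, (H.neighborFinset u).card := Finset.card_biUnion_le
        _ ≤ ∑ _u ∈ hDfin.toFinset, 2 := Finset.sum_le_sum (fun u _ => hdeg u)
        _ = 2 * hDfin.toFinset.card := by rw [Finset.sum_const, smul_eq_mul, mul_comm]
    have hsum : (extBoundary H D).ncard + D.ncard ≤ m := by
      have hdisj : Disjoint (extBoundary H D) D := by
        rw [Set.disjoint_left]; intro a ha; exact ha.1
      calc (extBoundary H D).ncard + D.ncard = (extBoundary H D ∪ D).ncard :=
            (Set.ncard_union_eq hdisj hBfin hDfin).symm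
        _ ≤ (Set.univ : Set (Fin m)).ncard :=
            Set.ncard_le_ncard (Set.subset_univ _) (Set.toFinite _)
        _ = m := by rw [Set.ncard_univ, Nat.card_eq_fintype_card, Fintype.card_fin]
    unfold setDifferential
    omega
  have hne : {x : ℤ | ∃ D : Set (Fin m), x = setDifferential H D}.Nonempty :=
    ⟨_, ∅, rfl⟩
  have hbdd : BddAbove {x : ℤ | ∃ D : Set (Fin m), x = setDifferential H D} := by
    refine ⟨((m / 3 : ℕ) : ℤ), ?_⟩
    rintro x ⟨D, rfl⟩
    exact ub D
  set k := m / 3 with hk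
  have hAdj' : ∀ (a b : ℕ) (ha : a < m) (hb : b < m), (b = a + 1 ∨ a = b + 1) →
      H.Adj ⟨a, ha⟩ ⟨b, hb⟩ := by
    intro a b ha hb h
    rcases h with rfl | rfl
    · exact hadj a hb
    · exact (hadj b ha).symm
  -- lower bound witness
  have h3k : 3 * k ≤ m := by omega
  set f : Fin k → Fin m := fun j => ⟨3 * j.val + 1, by have := j.isLt; omega⟩ with hf
  have hfinj : Function.Injective f := by
    intro a b h
    have := congrArg Fin.val h
    simp only [hf] at this
    exact Fin.ext (by omega)
  set g : Fin (2 * k) → Fin m :=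
    fun j => ⟨3 * (j.val / 2) + 2 * (j.val % 2), by have := j.isLt; omega⟩ with hg
  have hginj : Function.Injective g := by
    intro a b h
    have := congrArg Fin.val h
    simp only [hg] at this
    exact Fin.ext (by omega)
  set D₀ : Set (Fin m) := f '' Set.univ with hD₀
  have hgB : ∀ j, g j ∈ extBoundary H D₀ := by
    intro j
    constructor
    · rintro ⟨i, -, hi⟩
      have := congrArg Fin.val hi
      simp only [hf, hg] at this
      omega
    · refine ⟨f ⟨j.val / 2, by have := j.isLt; omega⟩,
        Set.mem_image_of_mem _ (Set.mem_univ _), ?_⟩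
      have hj := j.isLt
      exact hAdj' _ _ _ _ (by simp only [hf, hg]; omega)
  have hDcard : D₀.ncard = k := by
    rw [hD₀, Set.ncard_image_of_injective _ hfinj, Set.ncard_univ,
      Nat.card_eq_fintype_card, Fintype.card_fin]
  have hBcard : 2 * k ≤ (extBoundary H D₀).ncard := by
    have hsub : g '' Set.univ ⊆ extBoundary H D₀ := by
      rintro _ ⟨j, -, rfl⟩; exact hgB j
    calc 2 * k = (g '' Set.univ).ncard := by
          rw [Set.ncard_image_of_injective _ hginj, Set.ncard_univ,
            Nat.card_eq_fintype_card, Fintype.card_fin]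
      _ ≤ _ := Set.ncard_le_ncard hsub (Set.toFinite _)
  have hlow : (k : ℤ) ≤ setDifferential H D₀ := by
    unfold setDifferential
    rw [hDcard]
    omega
  refine le_antisymm (csSup_le hne ?_) (le_csSup_of_le hbdd ⟨D₀, rfl⟩ hlow)
  rintro x ⟨D, rfl⟩
  exact ub D


def cidx (n : ℕ) (s : Sym2 (Fin n)) : ℕ :=
  Sym2.lift ⟨fun a b =>
    if (a.val + 1) % n = b.val ∧ ¬((b.val + 1) % n = a.val) then a.val
    else if (b.val + 1) % n = a.val ∧ ¬((a.val + 1) % n = b.val) then b.val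
    else min a.val b.val,
    fun a b => by dsimp only; split_ifs <;> first | rfl | (exact Nat.min_comm _ _) | tauto⟩ s

lemma modChar {n : ℕ} (hn : 0 < n) {x : ℕ} (hx : x < 2 * n) {y : ℕ} :
    x % n = y ↔ (x < n ∧ y = x) ∨ (n ≤ x ∧ y = x - n) := by
  rcases Nat.lt_or_ge x n with h | h
  · rw [Nat.mod_eq_of_lt h]; omega
  · rw [Nat.mod_eq_sub_mod h, Nat.mod_eq_of_lt (by omega)]; omega

lemma cycleGraph_adj_nat {n : ℕ} (hn : 2 ≤ n) {u v : Fin n} :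
    (SimpleGraph.cycleGraph n).Adj u v ↔
      (u.val + 1) % n = v.val ∨ (v.val + 1) % n = u.val := by
  rw [SimpleGraph.cycleGraph_adj']
  have ha := u.isLt; have hb := v.isLt
  have h1 : ∀ a b : Fin n, (a - b).val = 1 ↔ (b.val + 1) % n = a.val := by
    intro a b
    have ha := a.isLt; have hb := b.isLt
    rw [Fin.sub_def]
    simp only
    rw [modChar (by omega) (by omega), modChar (by omega) (by omega)]
    omega
  rw [h1, h1]
  tauto

open SimpleGraph

lemma pathGraph_edge {n : ℕ} {s : Sym2 (Fin n)} (hs : s ∈ (pathGraph n).edgeSet) :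
    ∃ (i : ℕ) (hi : i + 1 < n), s = s(⟨i, Nat.lt_of_succ_lt hi⟩, ⟨i + 1, hi⟩) := by
  induction s using Sym2.ind with
  | _ a b =>
    rw [SimpleGraph.mem_edgeSet, pathGraph_adj] at hs
    rcases hs with h | h
    · exact ⟨a.val, by have := b.isLt; omega,
        by rw [Sym2.eq_iff]; left; exact ⟨Fin.ext rfl, Fin.ext h.symm⟩⟩
    · exact ⟨b.val, by have := a.isLt; omega,
        by rw [Sym2.eq_iff]; right; exact ⟨Fin.ext h.symm, Fin.ext rfl⟩⟩

lemma cycleGraph_edge {n : ℕ} (hn : 2 ≤ n) {s : Sym2 (Fin n)} (hs : s ∈ (cycleGraph n).edgeSet) :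
    ∃ (i : ℕ) (hi : i < n), s = s(⟨i, hi⟩, ⟨(i + 1) % n, Nat.mod_lt _ (by omega)⟩) := by
  induction s using Sym2.ind with
  | _ a b =>
    rw [SimpleGraph.mem_edgeSet, cycleGraph_adj_nat hn] at hs
    rcases hs with h | h
    · exact ⟨a.val, a.isLt, by rw [Sym2.eq_iff]; left; exact ⟨Fin.ext rfl, Fin.ext h.symm⟩⟩
    · exact ⟨b.val, b.isLt, by rw [Sym2.eq_iff]; right; exact ⟨Fin.ext h.symm, Fin.ext rfl⟩⟩

def pidx {n : ℕ} (s : Sym2 (Fin n)) : ℕ :=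
  Sym2.lift ⟨fun a b => min a.val b.val, fun a b => Nat.min_comm _ _⟩ s

lemma pidx_mk {n : ℕ} (i : ℕ) (h1 : i < n) (h2 : i + 1 < n) :
    pidx s(⟨i, h1⟩, ⟨i + 1, h2⟩) = i := by
  simp only [pidx, Sym2.lift_mk]
  omega

lemma cidx_mk {n : ℕ} (hn : 3 ≤ n) (i : ℕ) (hi : i < n) (h2 : (i + 1) % n < n) :
    cidx n s(⟨i, hi⟩, ⟨(i + 1) % n, h2⟩) = i := by
  have hjq := (modChar (n := n) (by omega) (x := i + 1) (by omega) (y := (i + 1) % n)).mp rfl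
  have hnot : ¬(((i + 1) % n + 1) % n = i) := by
    rw [modChar (by omega) (by omega)]
    omega
  simp only [cidx, Sym2.lift_mk]
  split_ifs with h h'
  · rfl
  · exact absurd ⟨trivial, hnot⟩ h
  · exact absurd ⟨trivial, hnot⟩ h

lemma cidx_lt {n : ℕ} (hn : 3 ≤ n) {s : Sym2 (Fin n)} (hs : s ∈ (cycleGraph n).edgeSet) :
    cidx n s < n := by
  obtain ⟨i, hi, rfl⟩ := cycleGraph_edge (by omega) hs
  rw [cidx_mk hn i hi]
  exact hi

lemma pathGraph_degree_le {n : ℕ} [DecidableRel (pathGraph n).Adj] (v : Fin n) :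
    (pathGraph n).degree v ≤ 2 := by
  have hv := v.isLt
  set x : Fin n := if h : v.val + 1 < n then ⟨v.val + 1, h⟩ else v with hx
  set y : Fin n := if h : 0 < v.val then ⟨v.val - 1, by omega⟩ else v with hy
  have hsub : (pathGraph n).neighborFinset v ⊆ {x, y} := by
    intro u hu
    rw [SimpleGraph.mem_neighborFinset, pathGraph_adj] at hu
    have hu' := u.isLt
    rw [Finset.mem_insert, Finset.mem_singleton]
    rcases hu with h | h
    · left
      rw [hx, dif_pos (by omega)]
      exact Fin.ext (by simp; omega)
    · right
      rw [hy, dif_pos (by omega)]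
      exact Fin.ext (by simp; omega)
  exact (Finset.card_le_card hsub).trans Finset.card_le_two

lemma cycleGraph_degree_le {n : ℕ} (hn : 3 ≤ n) [DecidableRel (cycleGraph n).Adj] (v : Fin n) :
    (cycleGraph n).degree v ≤ 2 := by
  have hv := v.isLt
  set x : Fin n := ⟨(v.val + 1) % n, Nat.mod_lt _ (by omega)⟩ with hx
  set y : Fin n := ⟨(v.val + (n - 1)) % n, Nat.mod_lt _ (by omega)⟩ with hy
  have hsub : (cycleGraph n).neighborFinset v ⊆ {x, y} := by
    intro u hu
    rw [SimpleGraph.mem_neighborFinset, cycleGraph_adj_nat (by omega)] at hu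
    have hu' := u.isLt
    rw [modChar (by omega) (by omega), modChar (by omega) (by omega)] at hu
    have hxv := (modChar (n := n) (by omega) (x := v.val + 1) (by omega) (y := x.val)).mp rfl
    have hyv := (modChar (n := n) (by omega) (x := v.val + (n - 1)) (by omega) (y := y.val)).mp rfl
    rw [Finset.mem_insert, Finset.mem_singleton]
    have : u.val = x.val ∨ u.val = y.val := by omega
    rcases this with h | h
    · exact Or.inl (Fin.ext h)
    · exact Or.inr (Fin.ext h)
  exact (Finset.card_le_card hsub).trans Finset.card_le_two

def pathEquiv (n : ℕ) (hn : 2 ≤ n) : (Fin n ⊕ (pathGraph n).edgeSet) ≃ Fin (2 * n - 1) where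
  toFun a :=
    match a with
    | .inl v => ⟨2 * v.val, by have := v.isLt; omega⟩
    | .inr e => ⟨2 * pidx e.val + 1, by
        obtain ⟨i, hi, he⟩ := pathGraph_edge e.prop
        rw [he, pidx_mk]
        omega⟩
  invFun j :=
    if h : j.val % 2 = 0 then .inl ⟨j.val / 2, by have := j.isLt; omega⟩
    else .inr ⟨s(⟨j.val / 2, by have := j.isLt; omega⟩, ⟨j.val / 2 + 1, by have := j.isLt; omega⟩),
      by rw [SimpleGraph.mem_edgeSet, pathGraph_adj]; left; rfl⟩
  left_inv := by
    rintro (v | ⟨s, hs⟩)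
    · simp only
      rw [dif_pos (by omega)]
      exact congrArg Sum.inl (Fin.ext (by simp only; omega))
    · obtain ⟨i, hi, rfl⟩ := pathGraph_edge hs
      simp only [pidx_mk]
      rw [dif_neg (by omega)]
      refine congrArg Sum.inr (Subtype.ext ?_)
      simp only
      rw [Sym2.eq_iff]
      left
      exact ⟨Fin.ext (by simp only; omega), Fin.ext (by simp only; omega)⟩
  right_inv := by
    intro j
    have hj := j.isLt
    by_cases h : j.val % 2 = 0
    · simp only
      rw [dif_pos h]
      exact Fin.ext (by simp only; omega)
    · simp only
      rw [dif_neg h]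
      simp only [pidx_mk]
      exact Fin.ext (by simp only; omega)

def pathIso (n : ℕ) (hn : 2 ≤ n) : subdivision (pathGraph n) ≃g pathGraph (2 * n - 1) where
  toEquiv := pathEquiv n hn
  map_rel_iff' := by
    rintro (v | ⟨s, hs⟩) (w | ⟨t, ht⟩)
    · refine iff_of_false ?_ (fun h => h)
      rw [pathGraph_adj]
      simp only [pathEquiv, Equiv.coe_fn_mk]
      omega
    · obtain ⟨i, hi, rfl⟩ := pathGraph_edge ht
      simp only [pathEquiv, Equiv.coe_fn_mk, pidx_mk]
      rw [pathGraph_adj]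
      simp only
      constructor
      · intro h
        exact Sym2.mem_iff.mpr (by
          rcases (by omega : v.val = i ∨ v.val = i + 1) with h' | h'
          · exact Or.inl (Fin.ext h')
          · exact Or.inr (Fin.ext h'))
      · intro h
        rcases Sym2.mem_iff.mp h with rfl | rfl
        · simp; try omega
        · simp; try omega
    · obtain ⟨i, hi, rfl⟩ := pathGraph_edge hs
      simp only [pathEquiv, Equiv.coe_fn_mk, pidx_mk]
      rw [pathGraph_adj]
      simp only
      constructor
      · intro h
        exact Sym2.mem_iff.mpr (by
          rcases (by omega : w.val = i ∨ w.val = i + 1) with h' | h'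
          · exact Or.inl (Fin.ext h')
          · exact Or.inr (Fin.ext h'))
      · intro h
        rcases Sym2.mem_iff.mp h with rfl | rfl
        · simp; try omega
        · simp; try omega
    · obtain ⟨i, hi, rfl⟩ := pathGraph_edge hs
      obtain ⟨i', hi', rfl⟩ := pathGraph_edge ht
      refine iff_of_false ?_ (fun h => h)
      rw [pathGraph_adj]
      simp only [pathEquiv, Equiv.coe_fn_mk, pidx_mk]
      omega

lemma cyc_adj_mk {N : ℕ} (hN : 2 ≤ N) {a b : ℕ} (ha : a < N) (hb : b < N) :
    (cycleGraph N).Adj ⟨a, ha⟩ ⟨b, hb⟩ ↔ ((a + 1) % N = b ∨ (b + 1) % N = a) := by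
  rw [cycleGraph_adj_nat hN]

def cycleEquiv (n : ℕ) (hn : 3 ≤ n) : (Fin n ⊕ (cycleGraph n).edgeSet) ≃ Fin (2 * n) where
  toFun a :=
    match a with
    | .inl v => ⟨2 * v.val, by have := v.isLt; omega⟩
    | .inr e => ⟨2 * cidx n e.val + 1, by have := cidx_lt hn e.prop; omega⟩
  invFun j :=
    if h : j.val % 2 = 0 then .inl ⟨j.val / 2, by have := j.isLt; omega⟩
    else .inr ⟨s(⟨j.val / 2, by have := j.isLt; omega⟩,
        ⟨(j.val / 2 + 1) % n, Nat.mod_lt _ (by omega)⟩),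
      by rw [SimpleGraph.mem_edgeSet, cycleGraph_adj_nat (by omega)]; left; rfl⟩
  left_inv := by
    rintro (v | ⟨s, hs⟩)
    · simp only
      rw [dif_pos (by omega)]
      exact congrArg Sum.inl (Fin.ext (by simp only [Fin.val_mk]; omega))
    · obtain ⟨i, hi, rfl⟩ := cycleGraph_edge (by omega) hs
      simp only [cidx_mk hn]
      rw [dif_neg (by omega)]
      refine congrArg Sum.inr (Subtype.ext ?_)
      simp only
      rw [Sym2.eq_iff]
      left
      constructor
      · exact Fin.ext (by simp only [Fin.val_mk]; omega)
      · refine Fin.ext ?_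
        show ((2 * i + 1) / 2 + 1) % n = (i + 1) % n
        have h' : (2 * i + 1) / 2 = i := by omega
        rw [h']
  right_inv := by
    intro j
    have hj := j.isLt
    by_cases h : j.val % 2 = 0
    · simp only
      rw [dif_pos h]
      exact Fin.ext (by simp only [Fin.val_mk]; omega)
    · simp only
      rw [dif_neg h]
      simp only [cidx_mk hn]
      exact Fin.ext (by simp only [Fin.val_mk]; omega)

def cycleIso (n : ℕ) (hn : 3 ≤ n) : subdivision (cycleGraph n) ≃g cycleGraph (2 * n) where
  toEquiv := cycleEquiv n hn
  map_rel_iff' := by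
    rintro (v | ⟨s, hs⟩) (w | ⟨t, ht⟩)
    · refine iff_of_false ?_ (fun h => h)
      rw [cycleEquiv]
      simp only [Equiv.coe_fn_mk]
      rw [cyc_adj_mk (by omega)]
      have hv := v.isLt; have hw := w.isLt
      rw [modChar (by omega) (by omega), modChar (by omega) (by omega)]
      omega
    · obtain ⟨i, hi, rfl⟩ := cycleGraph_edge (by omega) ht
      rw [cycleEquiv]
      simp only [Equiv.coe_fn_mk, cidx_mk hn]
      rw [cyc_adj_mk (by omega)]
      have hv := v.isLt
      have hm := (modChar (n := n) (by omega) (x := i + 1) (by omega) (y := (i + 1) % n)).mp rfl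
      rw [modChar (by omega) (by omega), modChar (by omega) (by omega)]
      constructor
      · intro h
        refine Sym2.mem_iff.mpr ?_
        rcases (by omega : v.val = i ∨ v.val = (i + 1) % n) with h' | h'
        · exact Or.inl (Fin.ext h')
        · exact Or.inr (Fin.ext h')
      · intro h
        have hv' : v.val = i ∨ v.val = (i + 1) % n := by
          rcases Sym2.mem_iff.mp h with h' | h'
          · exact Or.inl (congrArg Fin.val h')
          · exact Or.inr (congrArg Fin.val h')
        omega
    · obtain ⟨i, hi, rfl⟩ := cycleGraph_edge (by omega) hs
      rw [cycleEquiv]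
      simp only [Equiv.coe_fn_mk, cidx_mk hn]
      rw [cyc_adj_mk (by omega)]
      have hw := w.isLt
      have hm := (modChar (n := n) (by omega) (x := i + 1) (by omega) (y := (i + 1) % n)).mp rfl
      rw [modChar (by omega) (by omega), modChar (by omega) (by omega)]
      constructor
      · intro h
        refine Sym2.mem_iff.mpr ?_
        rcases (by omega : w.val = i ∨ w.val = (i + 1) % n) with h' | h'
        · exact Or.inl (Fin.ext h')
        · exact Or.inr (Fin.ext h')
      · intro h
        have hw' : w.val = i ∨ w.val = (i + 1) % n := by
          rcases Sym2.mem_iff.mp h with h' | h'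
          · exact Or.inl (congrArg Fin.val h')
          · exact Or.inr (congrArg Fin.val h')
        omega
    · obtain ⟨i, hi, rfl⟩ := cycleGraph_edge (by omega) hs
      obtain ⟨i', hi', rfl⟩ := cycleGraph_edge (by omega) ht
      refine iff_of_false ?_ (fun h => h)
      rw [cycleEquiv]
      simp only [Equiv.coe_fn_mk, cidx_mk hn]
      rw [cyc_adj_mk (by omega)]
      rw [modChar (by omega) (by omega), modChar (by omega) (by omega)]
      omega

/-- (i) For all `n ≥ 2`, `∂(S(P_n)) = ⌊(2n - 1)/3⌋`; (ii) for all `n ≥ 3`,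
`∂(S(C_n)) = ⌊2n/3⌋`. -/
theorem differential_subdivision_path_cycle :
    (∀ n : ℕ, 2 ≤ n →
        graphDifferential (subdivision (SimpleGraph.pathGraph n)) = ((2 * n - 1) / 3 : ℕ)) ∧
      (∀ n : ℕ, 3 ≤ n →
        graphDifferential (subdivision (SimpleGraph.cycleGraph n)) = ((2 * n) / 3 : ℕ)) := by
  constructor
  · intro n hn
    classical
    rw [graphDifferential_congr (pathIso n hn)]
    exact graphDifferential_eq_of (2 * n - 1) (pathGraph (2 * n - 1))
      (fun v => pathGraph_degree_le v)
      (fun i h => by rw [pathGraph_adj]; left; rfl)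
  · intro n hn
    classical
    rw [graphDifferential_congr (cycleIso n hn)]
    exact graphDifferential_eq_of (2 * n) (cycleGraph (2 * n))
      (cycleGraph_degree_le (by omega))
      (fun i h => by rw [cyc_adj_mk (by omega)]; left; exact Nat.mod_eq_of_lt h)
end

section
/- Let K_n denote the complete graph on n ≥ 3 vertices. Then the differential of its subdivision graph satisfies ∂(S(K_n)) = n(n−1)/2 + 2 − n. -/
section Aux

open Set

@[simp] lemma subdiv_adj_il {V : Type*} {G : SimpleGraph V} (v : V) (e : G.edgeSet) :
    (subdivision G).Adj (Sum.inl v) (Sum.inr e) ↔ v ∈ (e : Sym2 V) := Iff.rfl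

@[simp] lemma subdiv_adj_ri {V : Type*} {G : SimpleGraph V} (v : V) (e : G.edgeSet) :
    (subdivision G).Adj (Sum.inr e) (Sum.inl v) ↔ v ∈ (e : Sym2 V) := Iff.rfl

@[simp] lemma subdiv_adj_ll {V : Type*} {G : SimpleGraph V} (v w : V) :
    (subdivision G).Adj (Sum.inl v) (Sum.inl w) ↔ False := Iff.rfl

@[simp] lemma subdiv_adj_rr {V : Type*} {G : SimpleGraph V} (e f : G.edgeSet) :
    (subdivision G).Adj (Sum.inr e) (Sum.inr f) ↔ False := Iff.rfl

/-- split of a set of vertices of the subdivision graph -/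
lemma sum_set_eq {α β : Type*} (D : Set (α ⊕ β)) :
    D = Sum.inl '' (Sum.inl ⁻¹' D) ∪ Sum.inr '' (Sum.inr ⁻¹' D) := by
  ext (v | e) <;> simp

lemma ncard_sum_set {α β : Type*} [Finite α] [Finite β] (D : Set (α ⊕ β)) :
    D.ncard = (Sum.inl ⁻¹' D : Set α).ncard + (Sum.inr ⁻¹' D : Set β).ncard := by
  conv_lhs => rw [sum_set_eq D]
  rw [Set.ncard_union_eq (by
    simp only [Set.disjoint_left]
    rintro x ⟨a, _, rfl⟩ ⟨b, _, h⟩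
    simp at h) (Set.toFinite _) (Set.toFinite _),
    Set.ncard_image_of_injective _ Sum.inl_injective,
    Set.ncard_image_of_injective _ Sum.inr_injective]

lemma filter_mem_sym2_card_le {α : Type*} [Fintype α] [DecidableEq α] (z : Sym2 α) :
    (Finset.univ.filter (fun v => v ∈ z)).card ≤ 2 := by
  induction z using Sym2.ind with
  | _ x y =>
    have : Finset.univ.filter (fun v => v ∈ s(x, y)) ⊆ {x, y} := by
      intro v hv
      simp only [Finset.mem_filter, Sym2.mem_iff] at hv
      simp [hv.2]
    exact le_trans (Finset.card_le_card this)
      (le_trans (Finset.card_insert_le _ _) (by simp))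

/-- Double counting: a set of vertices each covered by an edge of `F` has size `≤ 2|F|`. -/
lemma ncard_covered_le {α : Type*} [Fintype α] [DecidableEq α] {G : SimpleGraph α}
    (S : Set α) (F : Set G.edgeSet)
    (h : ∀ v ∈ S, ∃ e ∈ F, v ∈ (e : Sym2 α)) : S.ncard ≤ 2 * F.ncard := by
  classical
  rw [Set.ncard_eq_toFinset_card' S, Set.ncard_eq_toFinset_card' F]
  have hsub : S.toFinset ⊆ F.toFinset.biUnion
      (fun e => Finset.univ.filter (fun v => v ∈ (e : Sym2 α))) := by
    intro v hv
    rw [Set.mem_toFinset] at hv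
    obtain ⟨e, he, hve⟩ := h v hv
    simp only [Finset.mem_biUnion, Set.mem_toFinset, Finset.mem_filter, Finset.mem_univ]
    exact ⟨e, he, trivial, hve⟩
  calc S.toFinset.card ≤ _ := Finset.card_le_card hsub
    _ ≤ ∑ e ∈ F.toFinset, (Finset.univ.filter (fun v => v ∈ (e : Sym2 α))).card :=
        Finset.card_biUnion_le
    _ ≤ ∑ _e ∈ F.toFinset, 2 := Finset.sum_le_sum (fun e _ => filter_mem_sym2_card_le _)
    _ = 2 * F.toFinset.card := by rw [Finset.sum_const, smul_eq_mul, mul_comm]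

/-- Edges of `K n` within a set `C` number at least `|C|·(|C|-1)/2`. -/
lemma edges_within {n : ℕ} (C : Set (Fin n)) :
    C.ncard * C.ncard ≤ 2 * {e : (⊤ : SimpleGraph (Fin n)).edgeSet |
        ∀ v ∈ (e : Sym2 (Fin n)), v ∈ C}.ncard + C.ncard := by
  classical
  set Ehat : Set (⊤ : SimpleGraph (Fin n)).edgeSet :=
    {e | ∀ v ∈ (e : Sym2 (Fin n)), v ∈ C} with hEhat
  rw [Set.ncard_eq_toFinset_card C (Set.toFinite C),
    Set.ncard_eq_toFinset_card Ehat (Set.toFinite Ehat)]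
  set cF := (Set.toFinite C).toFinset with hcF
  set eF := (Set.toFinite Ehat).toFinset with heF
  have hmap : ∀ p ∈ cF.offDiag,
      (fun p : Fin n × Fin n => s(p.1, p.2)) p ∈ eF.image Subtype.val := by
    rintro ⟨x, y⟩ hp
    simp only [Finset.mem_offDiag, hcF, Set.Finite.mem_toFinset] at hp
    obtain ⟨hx, hy, hne⟩ := hp
    have hmem : s(x, y) ∈ (⊤ : SimpleGraph (Fin n)).edgeSet := by
      rw [SimpleGraph.mem_edgeSet]; exact hne
    refine Finset.mem_image.2 ⟨⟨s(x,y), hmem⟩, ?_, rfl⟩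
    rw [heF, Set.Finite.mem_toFinset, hEhat]
    intro v hv
    rw [Sym2.mem_iff] at hv
    rcases hv with rfl | rfl <;> assumption
  have h2 : cF.offDiag.card ≤ 2 * (eF.image Subtype.val).card := by
    apply Finset.card_le_mul_card_image_of_maps_to hmap
    intro b
    induction b using Sym2.ind with
    | _ x y =>
      intro _
      have hss : cF.offDiag.filter (fun p => s(p.1, p.2) = s(x, y)) ⊆ {(x, y), (y, x)} := by
        rintro ⟨u, v⟩ hp
        simp only [Finset.mem_filter, Sym2.eq_iff] at hp
        rcases hp.2 with ⟨rfl, rfl⟩ | ⟨rfl, rfl⟩ <;> simp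
      have h2' : ({(x, y), (y, x)} : Finset (Fin n × Fin n)).card ≤ 2 :=
        (Finset.card_insert_le _ _).trans (by simp)
      exact (Finset.card_le_card hss).trans h2'
  have himg : (eF.image Subtype.val).card = eF.card :=
    Finset.card_image_of_injective _ Subtype.coe_injective
  rw [himg, Finset.offDiag_card] at h2
  omega

lemma two_mul_card_edges {n : ℕ} :
    2 * Nat.card (⊤ : SimpleGraph (Fin n)).edgeSet = n * (n - 1) := by
  classical
  have h1 : Nat.card (⊤ : SimpleGraph (Fin n)).edgeSet
      = (⊤ : SimpleGraph (Fin n)).edgeFinset.card := by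
    rw [Nat.card_eq_fintype_card, SimpleGraph.edgeFinset, Set.toFinset_card]
  rw [h1, SimpleGraph.card_edgeFinset_top_eq_card_choose_two, Fintype.card_fin,
    Nat.choose_two_right]
  rcases n with _ | m
  · simp
  · have heven : 2 ∣ (m + 1) * (m + 1 - 1) := by
      simpa [Nat.mul_comm] using (Nat.even_mul_succ_self m).two_dvd
    exact Nat.mul_div_cancel' heven

lemma diff_le {n : ℕ} (hn : 3 ≤ n)
    (D : Set (Fin n ⊕ ((⊤ : SimpleGraph (Fin n)).edgeSet : Set (Sym2 (Fin n))))) :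
    setDifferential (subdivision (⊤ : SimpleGraph (Fin n))) D ≤
      (Nat.card (⊤ : SimpleGraph (Fin n)).edgeSet : ℤ) + 2 - n := by
  classical
  set B := extBoundary (subdivision (⊤ : SimpleGraph (Fin n))) D with hBdef
  set A : Set (Fin n) := Sum.inl ⁻¹' D with hA
  set F : Set (⊤ : SimpleGraph (Fin n)).edgeSet := Sum.inr ⁻¹' D with hF
  set BV : Set (Fin n) := Sum.inl ⁻¹' B with hBV
  set BE : Set (⊤ : SimpleGraph (Fin n)).edgeSet := Sum.inr ⁻¹' B with hBE
  have hBVc : ∀ v ∈ BV, v ∉ A ∧ ∃ e ∈ F, v ∈ (e : Sym2 (Fin n)) := by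
    intro v hv
    obtain ⟨hvD, u, huD, hadj⟩ := hv
    rcases u with w | e
    · simp at hadj
    · exact ⟨hvD, e, huD, hadj⟩
  have hBEc : ∀ e ∈ BE, e ∉ F ∧ ∃ v ∈ A, v ∈ (e : Sym2 (Fin n)) := by
    intro e he
    obtain ⟨heD, u, huD, hadj⟩ := he
    rcases u with w | f
    · exact ⟨heD, w, huD, hadj⟩
    · simp at hadj
  set Ehat : Set (⊤ : SimpleGraph (Fin n)).edgeSet :=
    {e | ∀ v ∈ (e : Sym2 (Fin n)), v ∈ Aᶜ} with hEhat
  have h1 : BV.ncard ≤ 2 * F.ncard :=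
    ncard_covered_le BV F (fun v hv => (hBVc v hv).2)
  have h2 : BV.ncard ≤ Aᶜ.ncard :=
    Set.ncard_le_ncard (fun v hv => (hBVc v hv).1) (Set.toFinite _)
  have h3 : A.ncard + Aᶜ.ncard = n := by
    rw [Set.ncard_add_ncard_compl]
    simp [Nat.card_eq_fintype_card]
  have h4 : Aᶜ.ncard * Aᶜ.ncard ≤ 2 * Ehat.ncard + Aᶜ.ncard := edges_within Aᶜ
  have h5 : BE.ncard + Ehat.ncard ≤ Nat.card (⊤ : SimpleGraph (Fin n)).edgeSet := by
    have hdisj : Disjoint BE Ehat := by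
      rw [Set.disjoint_left]
      intro e he hee
      obtain ⟨_, v, hvA, hve⟩ := hBEc e he
      exact (hee v hve) hvA
    calc BE.ncard + Ehat.ncard = (BE ∪ Ehat).ncard :=
          (Set.ncard_union_eq hdisj (Set.toFinite _) (Set.toFinite _)).symm
      _ ≤ (Set.univ : Set (⊤ : SimpleGraph (Fin n)).edgeSet).ncard :=
          Set.ncard_le_ncard (Set.subset_univ _) (Set.toFinite _)
      _ = Nat.card (⊤ : SimpleGraph (Fin n)).edgeSet := Set.ncard_univ _
  have hBcard : B.ncard = BV.ncard + BE.ncard := ncard_sum_set B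
  have hDcard : D.ncard = A.ncard + F.ncard := ncard_sum_set D
  have h3' : (A.ncard : ℤ) + (Aᶜ.ncard : ℤ) = n := by exact_mod_cast h3
  rw [setDifferential, ← hBdef, hBcard, hDcard]
  push_cast
  nlinarith [sq_nonneg ((Aᶜ.ncard : ℤ) - 2), h1, h2, h4, h5, h3']

lemma diff_witness {n : ℕ} (hn : 3 ≤ n) :
    ∃ D, setDifferential (subdivision (⊤ : SimpleGraph (Fin n))) D =
      (Nat.card (⊤ : SimpleGraph (Fin n)).edgeSet : ℤ) + 2 - n := by
  classical
  set v0 : Fin n := ⟨0, by omega⟩ with hv0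
  set v1 : Fin n := ⟨1, by omega⟩ with hv1
  have hne : v0 ≠ v1 := by simp [hv0, hv1, Fin.ext_iff]
  set e01 : (⊤ : SimpleGraph (Fin n)).edgeSet :=
    ⟨s(v0, v1), by rw [SimpleGraph.mem_edgeSet]; exact fun h => hne h⟩ with he01
  set D : Set (Fin n ⊕ ((⊤ : SimpleGraph (Fin n)).edgeSet : Set (Sym2 (Fin n)))) :=
    Sum.inl '' ({v0, v1}ᶜ) ∪ {Sum.inr e01} with hD
  refine ⟨D, ?_⟩
  have hinlD : ∀ w : Fin n, Sum.inl w ∈ D ↔ w ∉ ({v0, v1} : Set (Fin n)) := by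
    intro w; simp [hD]
  have hinrD : ∀ e : (⊤ : SimpleGraph (Fin n)).edgeSet, Sum.inr e ∈ D ↔ e = e01 := by
    intro e; simp [hD]
  have hB : extBoundary (subdivision (⊤ : SimpleGraph (Fin n))) D =
      Sum.inl '' {v0, v1} ∪ Sum.inr '' ({e01}ᶜ) := by
    ext x
    rcases x with v | e
    · simp only [Set.mem_union, Set.mem_image, Set.mem_compl_iff]
      constructor
      · rintro ⟨hvD, u, huD, hadj⟩
        left
        refine ⟨v, ?_, rfl⟩
        by_contra hv
        exact hvD ((hinlD v).2 hv)
      · rintro (⟨w, hw, heq⟩ | ⟨f, hf, heq⟩)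
        · obtain rfl : w = v := Sum.inl_injective heq
          refine ⟨?_, Sum.inr e01, (hinrD e01).2 rfl, ?_⟩
          · rw [hinlD]; simp [hw]
          · rcases hw with rfl | rfl <;> simp [he01]
        · cases heq
    · simp only [Set.mem_union, Set.mem_image, Set.mem_compl_iff]
      constructor
      · rintro ⟨heD, u, huD, hadj⟩
        right
        refine ⟨e, ?_, rfl⟩
        intro hee
        exact heD ((hinrD e).2 hee)
      · rintro (⟨w, hw, heq⟩ | ⟨f, hf, heq⟩)
        · cases heq
        · cases heq
          simp only [Set.mem_singleton_iff] at hf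
          refine ⟨fun h => hf ((hinrD e).1 h), ?_⟩
          obtain ⟨z, hz⟩ := e
          induction z using Sym2.ind with
          | _ x y =>
            have hxy : x ≠ y := by
              rw [SimpleGraph.mem_edgeSet] at hz
              exact fun h => hz h
            have hout : x ∉ ({v0, v1} : Set (Fin n)) ∨ y ∉ ({v0, v1} : Set (Fin n)) := by
              by_contra hc
              push_neg at hc
              obtain ⟨hx, hy⟩ := hc
              apply hf
              apply Subtype.ext
              simp only [he01]
              rcases hx with rfl | rfl <;> rcases hy with rfl | rfl <;>
                first
                | exact absurd rfl hxy
                | (rw [Sym2.eq_iff]; tauto)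
            rcases hout with hx | hy
            · exact ⟨Sum.inl x, (hinlD x).2 hx, by simp⟩
            · exact ⟨Sum.inl y, (hinlD y).2 hy, by simp⟩
  have hcv : 2 + ({v0, v1}ᶜ : Set (Fin n)).ncard = n := by
    have h := Set.ncard_add_ncard_compl ({v0, v1} : Set (Fin n)) (Set.toFinite _) (Set.toFinite _)
    rw [Set.ncard_pair hne] at h
    rw [h, Nat.card_eq_fintype_card, Fintype.card_fin]
  have hce : 1 + ({e01}ᶜ : Set ((⊤ : SimpleGraph (Fin n)).edgeSet : Set (Sym2 (Fin n)))).ncard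
      = Nat.card (⊤ : SimpleGraph (Fin n)).edgeSet := by
    have h := Set.ncard_add_ncard_compl
      ({e01} : Set ((⊤ : SimpleGraph (Fin n)).edgeSet : Set (Sym2 (Fin n))))
      (Set.toFinite _) (Set.toFinite _)
    rwa [Set.ncard_singleton] at h
  have hBcard : (extBoundary (subdivision (⊤ : SimpleGraph (Fin n))) D).ncard =
      2 + ({e01}ᶜ : Set ((⊤ : SimpleGraph (Fin n)).edgeSet : Set (Sym2 (Fin n)))).ncard := by
    rw [hB, Set.ncard_union_eq (by
        rw [Set.disjoint_left]
        rintro x ⟨a, _, rfl⟩ ⟨b, _, h⟩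
        simp at h) (Set.toFinite _) (Set.toFinite _),
      Set.ncard_image_of_injective _ Sum.inl_injective,
      Set.ncard_image_of_injective _ Sum.inr_injective, Set.ncard_pair hne]
  have hDcard : D.ncard = ({v0, v1}ᶜ : Set (Fin n)).ncard + 1 := by
    rw [hD, Set.ncard_union_eq (by
        rw [Set.disjoint_left]
        rintro x ⟨a, _, rfl⟩ h
        simp at h) (Set.toFinite _) (Set.toFinite _),
      Set.ncard_image_of_injective _ Sum.inl_injective, Set.ncard_singleton]
  rw [setDifferential, hBcard, hDcard]
  push_cast
  omega

end Aux

/-- For the complete graph `K_n` with `n ≥ 3`,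
`∂(S(K_n)) = n(n-1)/2 + 2 - n`. -/
theorem differential_subdivision_complete (n : ℕ) (hn : 3 ≤ n) :
    graphDifferential (subdivision (⊤ : SimpleGraph (Fin n))) =
      (n : ℤ) * (n - 1) / 2 + 2 - n := by
  classical
  set m := Nat.card (⊤ : SimpleGraph (Fin n)).edgeSet with hm
  set t : ℤ := (m : ℤ) + 2 - n with ht
  have hmem : t ∈ {x : ℤ | ∃ D, x = setDifferential (subdivision (⊤ : SimpleGraph (Fin n))) D} := by
    obtain ⟨D, hD⟩ := diff_witness hn
    exact ⟨D, hD.symm⟩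
  have hub : ∀ x ∈ {x : ℤ | ∃ D, x = setDifferential (subdivision (⊤ : SimpleGraph (Fin n))) D},
      x ≤ t := by
    rintro x ⟨D, rfl⟩
    exact diff_le hn D
  have hsup : graphDifferential (subdivision (⊤ : SimpleGraph (Fin n))) = t := by
    rw [graphDifferential]
    exact le_antisymm (csSup_le ⟨t, hmem⟩ hub) (le_csSup ⟨t, hub⟩ hmem)
  rw [hsup, ht]
  have h2m : 2 * (m : ℤ) = (n : ℤ) * ((n : ℤ) - 1) := by
    have h := two_mul_card_edges (n := n)
    rw [← hm] at h
    have h' : ((2 * m : ℕ) : ℤ) = ((n * (n - 1) : ℕ) : ℤ) := by exact_mod_cast h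
    push_cast [Nat.cast_sub (by omega : 1 ≤ n)] at h'
    linarith
  rw [← h2m]
  omega
end
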